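/- Let p ∈ D_2 be a projection which is a finite (possibly empty) sum of mutually orthogonal projections P_μ, and such that 1 − p is also such a finite sum. Then there exists a unitary w ∈ F with 𝟙_w = p. -/

import Mathlib

set_option linter.unusedSectionVars false
set_option maxHeartbeats 1000000


open scoped BigOperators

variable {A : Type*} [CStarAlgebra A] [PartialOrder A] [StarOrderedRing A]

/-- `Sw S μ = S_{μ_1} ⋯ S_{μ_k}`. -/
def Sw {n : ℕ} (S : Fin n → A) (μ : List (Fin n)) : A := (μ.map S).prod

/-- `Pw S μ = S_μ S_μ*`. -/
def Pw {n : ℕ} (S : Fin n → A) (μ : List (Fin n)) : A := Sw S μ * star (Sw S μ)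

/-- The set 𝒱_n of finite sums ∑ S_α S_β*. -/
def Vset {n : ℕ} (S : Fin n → A) : Set A :=
  {x | ∃ J : Finset (List (Fin n) × List (Fin n)),
      x = ∑ p ∈ J, Sw S p.1 * star (Sw S p.2)}

/-- The Thompson-like group `S_n = 𝒱_n ∩ U(O_n)`; for n = 2 this is Thompson's group V. -/
def Vgrp {n : ℕ} (S : Fin n → A) : Set A := Vset S ∩ (unitary A : Set A)

/-- The diagonal D_n: closed linear span of the projections P_μ. -/
def Ddiag {n : ℕ} (S : Fin n → A) : Set A :=
  ((Submodule.span ℂ (Set.range (Pw S))).topologicalClosure : Submodule ℂ A)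

/-- Projection: self-adjoint idempotent. -/
def IsProjection (p : A) : Prop := IsSelfAdjoint p ∧ p * p = p

/-- Concatenation ν_1 ν_2 ⋯ ν_k. -/
def wcat {n : ℕ} (ν : ℕ → List (Fin n)) (k : ℕ) : List (Fin n) :=
  ((List.range k).map ν).flatten

/-- Modestly scaling endomorphism. -/
def ModestlyScaling {n : ℕ} (S : Fin n → A) (α : A →⋆ₐ[ℂ] A) : Prop :=
  ∀ ν : ℕ → List (Fin n), (∀ k, ν k ≠ []) →
    ∀ p : A, IsProjection p → (∀ k : ℕ, p ≤ α (Pw S (wcat ν (k + 1)))) → p = 0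

/-- Generator x_0 of Thompson's group F inside U(O_2). -/
def x0 (S : Fin 2 → A) : A :=
  S 0 * S 0 * star (S 0) + S 0 * S 1 * star (S 0) * star (S 1) + S 1 * star (S 1) * star (S 1)

/-- Generators x_k of Thompson's group F inside U(O_2). -/
def xgen (S : Fin 2 → A) : ℕ → A
  | 0 => x0 S
  | k + 1 => 1 - S 1 ^ (k + 1) * star (S 1 ^ (k + 1)) + S 1 ^ (k + 1) * x0 S * star (S 1 ^ (k + 1))

/-- Thompson's group F inside U(O_2): the subgroup generated by the x_k
(as a set: the submonoid generated by the x_k and their adjoints = inverses). -/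
def Fgrp (S : Fin 2 → A) : Set A :=
  (Submonoid.closure (Set.range (xgen S) ∪ star '' Set.range (xgen S)) : Set A)

/-- The extra generator for Thompson's group T. -/
def tgen (S : Fin 2 → A) : A :=
  S 1 * S 1 * star (S 0) + S 0 * star (S 0) * star (S 1) + S 1 * S 0 * star (S 1) * star (S 1)

/-- Thompson's group T inside U(O_2). -/
def Tgrp (S : Fin 2 → A) : Set A :=
  (Submonoid.closure ((Set.range (xgen S) ∪ {tgen S}) ∪
      star '' (Set.range (xgen S) ∪ {tgen S})) : Set A)

/-- `IsOneW S w p`: p is the largest projection in D_n with p w = p, i.e. p = 𝟙_w. -/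
def IsOneW {n : ℕ} (S : Fin n → A) (w p : A) : Prop :=
  p ∈ Ddiag S ∧ IsProjection p ∧ p * w = p ∧
    ∀ p' : A, p' ∈ Ddiag S → IsProjection p' → p' * w = p' → p' ≤ p

/-- min(q) = inf { |μ| : P_μ ≤ q } ∈ ℕ ∪ {∞}. -/
noncomputable def minProj {n : ℕ} (S : Fin n → A) (q : A) : ℕ∞ :=
  ⨅ μ ∈ {μ : List (Fin n) | Pw S μ ≤ q}, (μ.length : ℕ∞)

/-- The core UHF subalgebra F_n: closed linear span of {S_μ S_ν* : |μ| = |ν|}. -/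
def UHF {n : ℕ} (S : Fin n → A) : Set A :=
  ((Submodule.span ℂ {x : A | ∃ μ ν : List (Fin n), μ.length = ν.length ∧
      x = Sw S μ * star (Sw S ν)}).topologicalClosure : Submodule ℂ A)

/-- μ ≺ ν : at the first index where μ and ν differ, the letter of μ is smaller. -/
def WordLt {n : ℕ} (μ ν : List (Fin n)) : Prop :=
  ∃ σ : List (Fin n), ∃ a b : Fin n, a < b ∧ (σ ++ [a]) <+: μ ∧ (σ ++ [b]) <+: ν

section O2

variable (S : Fin 2 → A)

lemma o2_sw_nil : Sw S [] = 1 := rfl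

lemma o2_sw_cons (a : Fin 2) (μ : List (Fin 2)) : Sw S (a :: μ) = S a * Sw S μ := by
  simp [Sw]

lemma o2_sw_append (μ ν : List (Fin 2)) : Sw S (μ ++ ν) = Sw S μ * Sw S ν := by
  simp [Sw]

variable (hiso : ∀ i, star (S i) * S i = 1)
variable (hsum : S 0 * star (S 0) + S 1 * star (S 1) = 1)

lemma o2_pw_nil : Pw S [] = 1 := by simp [Pw, o2_sw_nil]

lemma o2_pw_star (μ : List (Fin 2)) : star (Pw S μ) = Pw S μ := by
  simp [Pw, star_mul, mul_assoc]

include hiso hsum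

lemma o2_orth01 : star (S 0) * S 1 = 0 := by
  have h : star (S 0) * ((S 0 * star (S 0) + S 1 * star (S 1)) * S 1) = star (S 0) * S 1 := by
    rw [hsum, one_mul]
  rw [add_mul, mul_add, mul_assoc (S 0), mul_assoc (S 1), hiso 1, mul_one,
    ← mul_assoc (star (S 0)), hiso 0, one_mul] at h
  exact add_eq_left.mp h

lemma o2_orth10 : star (S 1) * S 0 = 0 := by
  have h : star (S 1) * ((S 0 * star (S 0) + S 1 * star (S 1)) * S 0) = star (S 1) * S 0 := by
    rw [hsum, one_mul]
  rw [add_mul, mul_add, mul_assoc (S 0), hiso 0, mul_one, mul_assoc (S 1),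
    ← mul_assoc (star (S 1)) (S 1), hiso 1, one_mul] at h
  exact add_eq_left.mp h

lemma o2_dsame (a : Fin 2) (t : A) : star (S a) * (S a * t) = t := by
  rw [← mul_assoc, hiso a, one_mul]

lemma o2_dne {a b : Fin 2} (hab : a ≠ b) (t : A) : star (S a) * (S b * t) = 0 := by
  rw [← mul_assoc]
  match a, b, hab with
  | 0, 1, _ => rw [o2_orth01 S hiso hsum, zero_mul]
  | 1, 0, _ => rw [o2_orth10 S hiso hsum, zero_mul]
  | 0, 0, h => exact absurd rfl h
  | 1, 1, h => exact absurd rfl h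

lemma o2_sw_isometry (μ : List (Fin 2)) : star (Sw S μ) * Sw S μ = 1 := by
  induction μ with
  | nil => simp [o2_sw_nil]
  | cons a μ ih =>
    rw [o2_sw_cons, star_mul, mul_assoc, ← mul_assoc (star (S a)), hiso a, one_mul, ih]

lemma o2_sw_cancel (μ : List (Fin 2)) (t : A) : star (Sw S μ) * (Sw S μ * t) = t := by
  rw [← mul_assoc, o2_sw_isometry S hiso hsum, one_mul]

lemma o2_sw_orth : ∀ μ ν : List (Fin 2), ¬ μ <+: ν → ¬ ν <+: μ →
    star (Sw S μ) * Sw S ν = 0 := by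
  intro μ
  induction μ with
  | nil => intro ν h _; exact absurd (List.nil_prefix) h
  | cons a μ ih =>
    intro ν h h'
    match ν with
    | [] => exact absurd List.nil_prefix h'
    | b :: ν =>
      rw [o2_sw_cons, o2_sw_cons, star_mul, mul_assoc]
      by_cases hab : a = b
      · subst hab
        rw [o2_dsame S hiso hsum, ih ν (fun hp => h (List.cons_prefix_cons.mpr ⟨rfl, hp⟩))
          (fun hp => h' (List.cons_prefix_cons.mpr ⟨rfl, hp⟩))]
      · rw [o2_dne S hiso hsum hab, mul_zero]

lemma o2_pw_idem (μ : List (Fin 2)) : Pw S μ * Pw S μ = Pw S μ := by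
  rw [Pw, mul_assoc, o2_sw_cancel S hiso hsum]

lemma o2_pw_prefix (μ τ : List (Fin 2)) : Pw S μ * Pw S (μ ++ τ) = Pw S (μ ++ τ) := by
  rw [Pw, Pw, o2_sw_append, mul_assoc (Sw S μ) (Sw S τ), mul_assoc (Sw S μ) (star (Sw S μ)),
    o2_sw_cancel S hiso hsum]

lemma o2_pw_prefix' (μ τ : List (Fin 2)) : Pw S (μ ++ τ) * Pw S μ = Pw S (μ ++ τ) := by
  have := congrArg star (o2_pw_prefix S hiso hsum μ τ)
  simp only [star_mul, o2_pw_star] at this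
  exact this

lemma o2_pw_of_prefix {μ ν : List (Fin 2)} (h : μ <+: ν) : Pw S μ * Pw S ν = Pw S ν := by
  obtain ⟨τ, rfl⟩ := h; exact o2_pw_prefix S hiso hsum μ τ

lemma o2_pw_of_prefix' {μ ν : List (Fin 2)} (h : μ <+: ν) : Pw S ν * Pw S μ = Pw S ν := by
  obtain ⟨τ, rfl⟩ := h; exact o2_pw_prefix' S hiso hsum μ τ

lemma o2_pw_orth {μ ν : List (Fin 2)} (h : ¬ μ <+: ν) (h' : ¬ ν <+: μ) :
    Pw S μ * Pw S ν = 0 := by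
  rw [Pw, Pw, mul_assoc, ← mul_assoc (star (Sw S μ)), o2_sw_orth S hiso hsum μ ν h h']
  simp

lemma o2_pw_comm (μ ν : List (Fin 2)) : Pw S μ * Pw S ν = Pw S ν * Pw S μ := by
  by_cases h : μ <+: ν
  · rw [o2_pw_of_prefix S hiso hsum h, o2_pw_of_prefix' S hiso hsum h]
  · by_cases h' : ν <+: μ
    · rw [o2_pw_of_prefix S hiso hsum h', o2_pw_of_prefix' S hiso hsum h']
    · rw [o2_pw_orth S hiso hsum h h', o2_pw_orth S hiso hsum h' h]

lemma o2_pw_split (μ : List (Fin 2)) : Pw S (μ ++ [0]) + Pw S (μ ++ [1]) = Pw S μ := by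
  rw [Pw, Pw, Pw, o2_sw_append, o2_sw_append, star_mul, star_mul]
  have h0 : Sw S μ * Sw S [(0:Fin 2)] * (star (Sw S [(0:Fin 2)]) * star (Sw S μ))
      = Sw S μ * (Sw S [(0:Fin 2)] * star (Sw S [(0:Fin 2)])) * star (Sw S μ) := by
    noncomm_ring
  have h1 : Sw S μ * Sw S [(1:Fin 2)] * (star (Sw S [(1:Fin 2)]) * star (Sw S μ))
      = Sw S μ * (Sw S [(1:Fin 2)] * star (Sw S [(1:Fin 2)])) * star (Sw S μ) := by
    noncomm_ring
  rw [h0, h1, ← add_mul, ← mul_add]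
  have : Sw S [(0:Fin 2)] * star (Sw S [(0:Fin 2)]) + Sw S [(1:Fin 2)] * star (Sw S [(1:Fin 2)])
      = 1 := by
    simp only [o2_sw_cons, o2_sw_nil, mul_one]
    exact hsum
  rw [this, mul_one]

lemma o2_pw_one : Pw S [(0:Fin 2)] + Pw S [(1:Fin 2)] = 1 := by
  have := o2_pw_split S hiso hsum []
  rw [o2_pw_nil] at this
  simpa using this

lemma o2_starsw_pw (μ : List (Fin 2)) : star (Sw S μ) * Pw S μ = star (Sw S μ) := by
  rw [Pw, ← mul_assoc, o2_sw_isometry S hiso hsum, one_mul]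

lemma o2_pw_sw (μ : List (Fin 2)) : Pw S μ * Sw S μ = Sw S μ := by
  rw [Pw, mul_assoc, o2_sw_isometry S hiso hsum, mul_one]

lemma o2_sw_orth_of_pw {μ ν : List (Fin 2)} (h : Pw S μ * Pw S ν = 0) :
    star (Sw S μ) * Sw S ν = 0 := by
  calc star (Sw S μ) * Sw S ν
      = (star (Sw S μ) * Pw S μ) * (Pw S ν * Sw S ν) := by
        rw [o2_starsw_pw S hiso hsum, o2_pw_sw S hiso hsum]
    _ = star (Sw S μ) * (Pw S μ * Pw S ν) * Sw S ν := by noncomm_ring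
    _ = 0 := by rw [h]; simp

-- ===================== Stage 2 =====================

lemma o2_x0_a0 (σ : List (Fin 2)) : x0 S * Sw S (0 :: σ) = Sw S (0 :: 0 :: σ) := by
  simp only [x0, o2_sw_cons, add_mul, mul_assoc, o2_dsame S hiso hsum,
    o2_dne S hiso hsum (show (0:Fin 2) ≠ 1 by decide),
    o2_dne S hiso hsum (show (1:Fin 2) ≠ 0 by decide), mul_zero, add_zero, zero_add]

lemma o2_x0_a10 (σ : List (Fin 2)) : x0 S * Sw S (1 :: 0 :: σ) = Sw S (0 :: 1 :: σ) := by
  simp only [x0, o2_sw_cons, add_mul, mul_assoc, o2_dsame S hiso hsum,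
    o2_dne S hiso hsum (show (0:Fin 2) ≠ 1 by decide),
    o2_dne S hiso hsum (show (1:Fin 2) ≠ 0 by decide), mul_zero, add_zero, zero_add]

lemma o2_x0_a11 (σ : List (Fin 2)) : x0 S * Sw S (1 :: 1 :: σ) = Sw S (1 :: σ) := by
  simp only [x0, o2_sw_cons, add_mul, mul_assoc, o2_dsame S hiso hsum,
    o2_dne S hiso hsum (show (0:Fin 2) ≠ 1 by decide),
    o2_dne S hiso hsum (show (1:Fin 2) ≠ 0 by decide), mul_zero, add_zero, zero_add]

lemma o2_x0_ul : star (x0 S) * x0 S = 1 := by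
  simp only [x0, star_add, star_mul, star_star, add_mul, mul_add, mul_assoc,
    o2_dsame S hiso hsum, o2_dne S hiso hsum (show (0:Fin 2) ≠ 1 by decide),
    o2_dne S hiso hsum (show (1:Fin 2) ≠ 0 by decide),
    mul_zero, zero_mul, add_zero, zero_add, mul_one, one_mul]
  rw [add_assoc, ← mul_add]
  have key : S 0 * (star (S 0) * star (S 1)) + S 1 * (star (S 1) * star (S 1))
      = star (S 1) := by
    rw [← mul_assoc, ← mul_assoc, ← add_mul, hsum, one_mul]
  rw [key, hsum]

lemma o2_x0_ur : x0 S * star (x0 S) = 1 := by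
  simp only [x0, star_add, star_mul, star_star, add_mul, mul_add, mul_assoc,
    o2_dsame S hiso hsum, o2_dne S hiso hsum (show (0:Fin 2) ≠ 1 by decide),
    o2_dne S hiso hsum (show (1:Fin 2) ≠ 0 by decide),
    mul_zero, zero_mul, add_zero, zero_add, mul_one, one_mul]
  rw [← mul_add]
  have key : S 0 * (star (S 0) * star (S 0)) + S 1 * (star (S 1) * star (S 0))
      = star (S 0) := by
    rw [← mul_assoc, ← mul_assoc, ← add_mul, hsum, one_mul]
  rw [key, hsum]

lemma o2_x1_a0 (σ : List (Fin 2)) : xgen S 1 * Sw S (0 :: σ) = Sw S (0 :: σ) := by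
  simp only [xgen, zero_add, pow_one, sub_mul, add_mul, one_mul, mul_assoc, o2_sw_cons,
    o2_dne S hiso hsum (show (1:Fin 2) ≠ 0 by decide), mul_zero, sub_zero, add_zero]

lemma o2_x1_a10 (σ : List (Fin 2)) :
    xgen S 1 * Sw S (1 :: 0 :: σ) = Sw S (1 :: 0 :: 0 :: σ) := by
  have hx0 : x0 S * (S 0 * Sw S σ) = S 0 * (S 0 * Sw S σ) := by
    simpa only [o2_sw_cons] using o2_x0_a0 S hiso hsum σ
  simp only [xgen, zero_add, pow_one, sub_mul, add_mul, one_mul, mul_assoc, o2_sw_cons,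
    o2_dsame S hiso hsum, hx0, sub_self, zero_add]

lemma o2_x1_a110 (σ : List (Fin 2)) :
    xgen S 1 * Sw S (1 :: 1 :: 0 :: σ) = Sw S (1 :: 0 :: 1 :: σ) := by
  have hx0 : x0 S * (S 1 * (S 0 * Sw S σ)) = S 0 * (S 1 * Sw S σ) := by
    simpa only [o2_sw_cons] using o2_x0_a10 S hiso hsum σ
  simp only [xgen, zero_add, pow_one, sub_mul, add_mul, one_mul, mul_assoc, o2_sw_cons,
    o2_dsame S hiso hsum, hx0, sub_self, zero_add]

lemma o2_x1_a111 (σ : List (Fin 2)) :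
    xgen S 1 * Sw S (1 :: 1 :: 1 :: σ) = Sw S (1 :: 1 :: σ) := by
  have hx0 : x0 S * (S 1 * (S 1 * Sw S σ)) = S 1 * Sw S σ := by
    simpa only [o2_sw_cons] using o2_x0_a11 S hiso hsum σ
  simp only [xgen, zero_add, pow_one, sub_mul, add_mul, one_mul, mul_assoc, o2_sw_cons,
    o2_dsame S hiso hsum, hx0, sub_self, zero_add]

lemma o2_star_act {g : A} (hg : star g * g = 1) {α β : List (Fin 2)}
    (h : g * Sw S α = Sw S β) : star g * Sw S β = Sw S α := by
  rw [← h, ← mul_assoc, hg, one_mul]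

omit hiso hsum

lemma o2_corner_ul {e g : A} (he : star e * e = 1) (hg : star g * g = 1) :
    star (1 - e * star e + e * (g * star e)) * (1 - e * star e + e * (g * star e)) = 1 := by
  have hu : (1 - e * star e + e * (g * star e)) = 1 + e * ((g - 1) * star e) := by noncomm_ring
  have hsu : star (1 - e * star e + e * (g * star e)) = 1 + e * (star (g - 1) * star e) := by
    rw [hu, star_add, star_one, star_mul, star_mul, star_star]
    noncomm_ring
  rw [hsu, hu]
  have hkey : star (g - 1) + (g - 1) + star (g - 1) * (g - 1) = 0 := by
    have h2 : star (g - 1) * (g - 1) = star g * g - star g - g + 1 := by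
      simp only [star_sub, star_one]; noncomm_ring
    rw [h2, hg]
    simp only [star_sub, star_one]; noncomm_ring
  have expand : (1 + e * (star (g - 1) * star e)) * (1 + e * ((g - 1) * star e))
      = 1 + (e * (star (g - 1) * star e) + e * ((g - 1) * star e)
          + e * (star (g - 1) * ((star e * e) * ((g - 1) * star e)))) := by noncomm_ring
  rw [expand, he]
  have regroup : e * (star (g - 1) * star e) + e * ((g - 1) * star e)
      + e * (star (g - 1) * (1 * ((g - 1) * star e)))
      = e * ((star (g - 1) + (g - 1) + star (g - 1) * (g - 1)) * star e) := by noncomm_ring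
  rw [regroup, hkey]
  simp

lemma o2_corner_ur {e g : A} (he : star e * e = 1) (hg : g * star g = 1) :
    (1 - e * star e + e * (g * star e)) * star (1 - e * star e + e * (g * star e)) = 1 := by
  have h := o2_corner_ul (e := e) (g := star g) he (by rwa [star_star])
  have hrw : (1 - e * star e + e * (star g * star e))
      = star (1 - e * star e + e * (g * star e)) := by
    simp only [star_add, star_sub, star_one, star_mul, star_star]
    noncomm_ring
  rw [hrw, star_star] at h
  exact h

include hiso hsum

lemma o2_pow_iso (n : ℕ) : star (S 1 ^ n) * S 1 ^ n = 1 := by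
  induction n with
  | zero => simp
  | succ n ih =>
    rw [pow_succ, star_mul, mul_assoc, ← mul_assoc (star (S 1 ^ n)), ih, one_mul, hiso]

lemma o2_xgen_ul (k : ℕ) : star (xgen S k) * xgen S k = 1 := by
  cases k with
  | zero => exact o2_x0_ul S hiso hsum
  | succ k =>
    have h := o2_corner_ul (e := S 1 ^ (k+1)) (g := x0 S)
      (o2_pow_iso S hiso hsum (k+1)) (o2_x0_ul S hiso hsum)
    have : xgen S (k+1) = 1 - S 1 ^ (k+1) * star (S 1 ^ (k+1))
        + S 1 ^ (k+1) * (x0 S * star (S 1 ^ (k+1))) := by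
      simp only [xgen]; noncomm_ring
    rw [this]
    exact h

lemma o2_xgen_ur (k : ℕ) : xgen S k * star (xgen S k) = 1 := by
  cases k with
  | zero => exact o2_x0_ur S hiso hsum
  | succ k =>
    have h := o2_corner_ur (e := S 1 ^ (k+1)) (g := x0 S)
      (o2_pow_iso S hiso hsum (k+1)) (o2_x0_ur S hiso hsum)
    have : xgen S (k+1) = 1 - S 1 ^ (k+1) * star (S 1 ^ (k+1))
        + S 1 ^ (k+1) * (x0 S * star (S 1 ^ (k+1))) := by
      simp only [xgen]; noncomm_ring
    rw [this]
    exact h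

omit hiso hsum

lemma o2_mem_x (k : ℕ) : xgen S k ∈ Fgrp S :=
  Submonoid.subset_closure (Or.inl ⟨k, rfl⟩)

lemma o2_mem_xstar (k : ℕ) : star (xgen S k) ∈ Fgrp S :=
  Submonoid.subset_closure (Or.inr ⟨xgen S k, ⟨k, rfl⟩, rfl⟩)

lemma o2_mem_mul {a b : A} (ha : a ∈ Fgrp S) (hb : b ∈ Fgrp S) : a * b ∈ Fgrp S :=
  mul_mem ha hb

lemma o2_mem_star {a : A} (ha : a ∈ Fgrp S) : star a ∈ Fgrp S := by
  induction ha using Submonoid.closure_induction with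
  | mem x hx =>
    rcases hx with ⟨k, rfl⟩ | ⟨y, ⟨k, rfl⟩, rfl⟩
    · exact Submonoid.subset_closure (Or.inr ⟨xgen S k, ⟨k, rfl⟩, rfl⟩)
    · rw [star_star]; exact Submonoid.subset_closure (Or.inl ⟨k, rfl⟩)
  | one => rw [star_one]; exact one_mem _
  | mul a b _ _ ha hb => rw [star_mul]; exact mul_mem hb ha

include hiso hsum

lemma o2_F_unitary {a : A} (ha : a ∈ Fgrp S) : a ∈ unitary A := by
  have : Submonoid.closure (Set.range (xgen S) ∪ star '' Set.range (xgen S)) ≤ unitary A := by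
    apply Submonoid.closure_le.mpr
    rintro x (⟨k, rfl⟩ | ⟨y, ⟨k, rfl⟩, rfl⟩)
    · exact Unitary.mem_iff.mpr ⟨o2_xgen_ul S hiso hsum k, o2_xgen_ur S hiso hsum k⟩
    · exact Unitary.mem_iff.mpr ⟨by rw [star_star]; exact o2_xgen_ur S hiso hsum k,
        by rw [star_star]; exact o2_xgen_ul S hiso hsum k⟩
  exact this ha

omit hiso hsum

/-- The localized copy of x0 on the interval of the word μ. -/
def o2_y (μ : List (Fin 2)) : A :=
  1 - Pw S μ + Sw S μ * (x0 S * star (Sw S μ))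

include hiso hsum

lemma o2_y_nil : o2_y S [] = x0 S := by
  simp [o2_y, o2_pw_nil, o2_sw_nil]

lemma o2_y_one : o2_y S [1] = xgen S 1 := by
  simp only [o2_y, Pw, xgen, zero_add, pow_one, o2_sw_cons, o2_sw_nil, mul_one]
  noncomm_ring

lemma o2_y_act (μ σ : List (Fin 2)) :
    o2_y S μ * Sw S (μ ++ σ) = Sw S μ * (x0 S * Sw S σ) := by
  have expand : o2_y S μ * Sw S (μ ++ σ)
      = Sw S μ * Sw S σ - Sw S μ * ((star (Sw S μ) * Sw S μ) * Sw S σ)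
        + Sw S μ * (x0 S * ((star (Sw S μ) * Sw S μ) * Sw S σ)) := by
    rw [o2_y, Pw, o2_sw_append]; noncomm_ring
  rw [expand, o2_sw_isometry S hiso hsum, one_mul, sub_self, zero_add]

lemma o2_y_fix {μ ν : List (Fin 2)} (h : star (Sw S μ) * Sw S ν = 0) :
    o2_y S μ * Sw S ν = Sw S ν := by
  have expand : o2_y S μ * Sw S ν
      = Sw S ν - Sw S μ * (star (Sw S μ) * Sw S ν)
        + Sw S μ * (x0 S * (star (Sw S μ) * Sw S ν)) := by
    rw [o2_y, Pw]; noncomm_ring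
  rw [expand, h, mul_zero, sub_zero, mul_zero, mul_zero, add_zero]

lemma o2_y_unitary_l (μ : List (Fin 2)) : star (o2_y S μ) * o2_y S μ = 1 := by
  rw [o2_y, Pw]
  exact o2_corner_ul (o2_sw_isometry S hiso hsum μ) (o2_x0_ul S hiso hsum)

lemma o2_conj {g : A} (hg : g * star g = 1) {α μ : List (Fin 2)}
    (hact : g * Sw S α = Sw S μ) : g * o2_y S α * star g = o2_y S μ := by
  have h2 : star (Sw S α) * star g = star (Sw S μ) := by rw [← star_mul, hact]
  have expand : g * o2_y S α * star g
      = g * star g - (g * Sw S α) * (star (Sw S α) * star g)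
        + (g * Sw S α) * (x0 S * (star (Sw S α) * star g)) := by
    rw [o2_y, Pw]; noncomm_ring
  rw [expand, hg, hact, h2, o2_y, Pw]

lemma o2_conj_mem {g : A} (hgF : g ∈ Fgrp S) {α μ : List (Fin 2)}
    (hact : g * Sw S α = Sw S μ) (hy : o2_y S α ∈ Fgrp S) : o2_y S μ ∈ Fgrp S := by
  have hu := o2_F_unitary S hiso hsum hgF
  have hg : g * star g = 1 := (Unitary.mem_iff.mp hu).2
  rw [← o2_conj S hiso hsum hg hact]
  exact o2_mem_mul S (o2_mem_mul S hgF hy) (o2_mem_star S hgF)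

lemma o2_ext {u v : A} (B : List (List (Fin 2)))
    (hB : (B.map (Pw S)).sum = 1)
    (h : ∀ β ∈ B, u * Sw S β = v * Sw S β) : u = v := by
  have key : ∀ B' : List (List (Fin 2)), (∀ β ∈ B', u * Sw S β = v * Sw S β) →
      u * (B'.map (Pw S)).sum = v * (B'.map (Pw S)).sum := by
    intro B' hB'
    induction B' with
    | nil => simp
    | cons β B' ih =>
      simp only [List.map_cons, List.sum_cons, mul_add]
      rw [ih (fun b hb => hB' b (List.mem_cons_of_mem _ hb))]
      congr 1
      rw [Pw, ← mul_assoc, hB' β List.mem_cons_self, mul_assoc]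
  have := key B h
  rwa [hB, mul_one, mul_one] at this

lemma o2_part0 :
    (([[0,0],[0,1,0],[0,1,1],[1]] : List (List (Fin 2))).map (Pw S)).sum = 1 := by
  have e1 : Pw S [0,1,0] + Pw S [0,1,1] = Pw S [0,1] := by
    simpa using o2_pw_split S hiso hsum [0,1]
  have e2 : Pw S [0,0] + Pw S [0,1] = Pw S [0] := by
    simpa using o2_pw_split S hiso hsum [0]
  have e3 := o2_pw_one S hiso hsum
  simp only [List.map_cons, List.map_nil, List.sum_cons, List.sum_nil, add_zero]
  calc Pw S [0,0] + (Pw S [0,1,0] + (Pw S [0,1,1] + Pw S [1]))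
      = (Pw S [0,0] + (Pw S [0,1,0] + Pw S [0,1,1])) + Pw S [1] := by abel
    _ = 1 := by rw [e1, e2, e3]

lemma o2_part10 :
    (([[0],[1,0,0],[1,0,1,0],[1,0,1,1],[1,1]] : List (List (Fin 2))).map (Pw S)).sum = 1 := by
  have e1 : Pw S [1,0,1,0] + Pw S [1,0,1,1] = Pw S [1,0,1] := by
    simpa using o2_pw_split S hiso hsum [1,0,1]
  have e2 : Pw S [1,0,0] + Pw S [1,0,1] = Pw S [1,0] := by
    simpa using o2_pw_split S hiso hsum [1,0]
  have e3 : Pw S [1,0] + Pw S [1,1] = Pw S [1] := by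
    simpa using o2_pw_split S hiso hsum [1]
  have e4 := o2_pw_one S hiso hsum
  simp only [List.map_cons, List.map_nil, List.sum_cons, List.sum_nil, add_zero]
  calc Pw S [0] + (Pw S [1,0,0] + (Pw S [1,0,1,0] + (Pw S [1,0,1,1] + Pw S [1,1])))
      = Pw S [0] + (((Pw S [1,0,0] + (Pw S [1,0,1,0] + Pw S [1,0,1,1])) + Pw S [1,1])) := by
        abel
    _ = 1 := by rw [e1, e2, e3, e4]

lemma o2_seed0 : o2_y S [0] = x0 S * (x0 S * (star (xgen S 1) * star (x0 S))) := by
  have sx0_00 : ∀ σ, star (x0 S) * Sw S (0::0::σ) = Sw S (0::σ) :=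
    fun σ => o2_star_act S hiso hsum (o2_x0_ul S hiso hsum) (o2_x0_a0 S hiso hsum σ)
  have sx0_01 : ∀ σ, star (x0 S) * Sw S (0::1::σ) = Sw S (1::0::σ) :=
    fun σ => o2_star_act S hiso hsum (o2_x0_ul S hiso hsum) (o2_x0_a10 S hiso hsum σ)
  have sx0_1 : ∀ σ, star (x0 S) * Sw S (1::σ) = Sw S (1::1::σ) :=
    fun σ => o2_star_act S hiso hsum (o2_x0_ul S hiso hsum) (o2_x0_a11 S hiso hsum σ)
  have sx1_0 : ∀ σ, star (xgen S 1) * Sw S (0::σ) = Sw S (0::σ) :=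
    fun σ => o2_star_act S hiso hsum (o2_xgen_ul S hiso hsum 1) (o2_x1_a0 S hiso hsum σ)
  have sx1_100 : ∀ σ, star (xgen S 1) * Sw S (1::0::0::σ) = Sw S (1::0::σ) :=
    fun σ => o2_star_act S hiso hsum (o2_xgen_ul S hiso hsum 1) (o2_x1_a10 S hiso hsum σ)
  have sx1_101 : ∀ σ, star (xgen S 1) * Sw S (1::0::1::σ) = Sw S (1::1::0::σ) :=
    fun σ => o2_star_act S hiso hsum (o2_xgen_ul S hiso hsum 1) (o2_x1_a110 S hiso hsum σ)
  have sx1_11 : ∀ σ, star (xgen S 1) * Sw S (1::1::σ) = Sw S (1::1::1::σ) :=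
    fun σ => o2_star_act S hiso hsum (o2_xgen_ul S hiso hsum 1) (o2_x1_a111 S hiso hsum σ)
  apply o2_ext S hiso hsum ([[0,0],[0,1,0],[0,1,1],[1]]) (o2_part0 S hiso hsum)
  intro β hβ
  simp only [List.mem_cons, List.not_mem_nil, or_false] at hβ
  rcases hβ with rfl | rfl | rfl | rfl
  · show o2_y S [0] * Sw S ([0] ++ [0]) = _
    rw [o2_y_act S hiso hsum [0] [0], o2_x0_a0 S hiso hsum []]
    simp only [mul_assoc]
    rw [sx0_00 [], sx1_0 [], o2_x0_a0 S hiso hsum [], o2_x0_a0 S hiso hsum [0]]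
    all_goals simp only [o2_sw_cons, o2_sw_nil, mul_one, one_mul, mul_assoc]
  · show o2_y S [0] * Sw S ([0] ++ [1,0]) = _
    rw [o2_y_act S hiso hsum [0] [1,0], o2_x0_a10 S hiso hsum []]
    simp only [mul_assoc]
    rw [sx0_01 [0], sx1_100 [], o2_x0_a10 S hiso hsum [], o2_x0_a0 S hiso hsum [1]]
    all_goals simp only [o2_sw_cons, o2_sw_nil, mul_one, one_mul, mul_assoc]
  · show o2_y S [0] * Sw S ([0] ++ [1,1]) = _
    rw [o2_y_act S hiso hsum [0] [1,1], o2_x0_a11 S hiso hsum []]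
    simp only [mul_assoc]
    rw [sx0_01 [1], sx1_101 [], o2_x0_a11 S hiso hsum [0], o2_x0_a10 S hiso hsum []]
    all_goals simp only [o2_sw_cons, o2_sw_nil, mul_one, one_mul, mul_assoc]
  · rw [o2_y_fix S hiso hsum (o2_sw_orth S hiso hsum [0] [1] (by decide) (by decide))]
    simp only [mul_assoc]
    rw [sx0_1 [], sx1_11 [], o2_x0_a11 S hiso hsum [1], o2_x0_a11 S hiso hsum []]
    all_goals simp only [o2_sw_cons, o2_sw_nil, mul_one, one_mul, mul_assoc]

lemma o2_seed10 : o2_y S [1,0] =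
    xgen S 1 * (xgen S 1 * (star (x0 S) * (star (xgen S 1) * (x0 S * star (xgen S 1))))) := by
  have sx0_00 : ∀ σ, star (x0 S) * Sw S (0::0::σ) = Sw S (0::σ) :=
    fun σ => o2_star_act S hiso hsum (o2_x0_ul S hiso hsum) (o2_x0_a0 S hiso hsum σ)
  have sx0_01 : ∀ σ, star (x0 S) * Sw S (0::1::σ) = Sw S (1::0::σ) :=
    fun σ => o2_star_act S hiso hsum (o2_x0_ul S hiso hsum) (o2_x0_a10 S hiso hsum σ)
  have sx0_1 : ∀ σ, star (x0 S) * Sw S (1::σ) = Sw S (1::1::σ) :=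
    fun σ => o2_star_act S hiso hsum (o2_x0_ul S hiso hsum) (o2_x0_a11 S hiso hsum σ)
  have sx1_0 : ∀ σ, star (xgen S 1) * Sw S (0::σ) = Sw S (0::σ) :=
    fun σ => o2_star_act S hiso hsum (o2_xgen_ul S hiso hsum 1) (o2_x1_a0 S hiso hsum σ)
  have sx1_100 : ∀ σ, star (xgen S 1) * Sw S (1::0::0::σ) = Sw S (1::0::σ) :=
    fun σ => o2_star_act S hiso hsum (o2_xgen_ul S hiso hsum 1) (o2_x1_a10 S hiso hsum σ)
  have sx1_101 : ∀ σ, star (xgen S 1) * Sw S (1::0::1::σ) = Sw S (1::1::0::σ) :=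
    fun σ => o2_star_act S hiso hsum (o2_xgen_ul S hiso hsum 1) (o2_x1_a110 S hiso hsum σ)
  have sx1_11 : ∀ σ, star (xgen S 1) * Sw S (1::1::σ) = Sw S (1::1::1::σ) :=
    fun σ => o2_star_act S hiso hsum (o2_xgen_ul S hiso hsum 1) (o2_x1_a111 S hiso hsum σ)
  apply o2_ext S hiso hsum ([[0],[1,0,0],[1,0,1,0],[1,0,1,1],[1,1]]) (o2_part10 S hiso hsum)
  intro β hβ
  simp only [List.mem_cons, List.not_mem_nil, or_false] at hβ
  rcases hβ with rfl | rfl | rfl | rfl | rfl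
  · rw [o2_y_fix S hiso hsum (o2_sw_orth S hiso hsum [1,0] [0] (by decide) (by decide))]
    simp only [mul_assoc]
    rw [sx1_0 [], o2_x0_a0 S hiso hsum [], sx1_0 [0], sx0_00 [], o2_x1_a0 S hiso hsum [],
      o2_x1_a0 S hiso hsum []]
    all_goals simp only [o2_sw_cons, o2_sw_nil, mul_one, one_mul, mul_assoc]
  · show o2_y S [1,0] * Sw S ([1,0] ++ [0]) = _
    rw [o2_y_act S hiso hsum [1,0] [0], o2_x0_a0 S hiso hsum []]
    simp only [mul_assoc]
    rw [sx1_100 [], o2_x0_a10 S hiso hsum [], sx1_0 [1], sx0_01 [], o2_x1_a10 S hiso hsum [],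
      o2_x1_a10 S hiso hsum [0]]
    all_goals simp only [o2_sw_cons, o2_sw_nil, mul_one, one_mul, mul_assoc]
  · show o2_y S [1,0] * Sw S ([1,0] ++ [1,0]) = _
    rw [o2_y_act S hiso hsum [1,0] [1,0], o2_x0_a10 S hiso hsum []]
    simp only [mul_assoc]
    rw [sx1_101 [0], o2_x0_a11 S hiso hsum [0,0], sx1_100 [], sx0_1 [0],
      o2_x1_a110 S hiso hsum [], o2_x1_a10 S hiso hsum [1]]
    all_goals simp only [o2_sw_cons, o2_sw_nil, mul_one, one_mul, mul_assoc]
  · show o2_y S [1,0] * Sw S ([1,0] ++ [1,1]) = _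
    rw [o2_y_act S hiso hsum [1,0] [1,1], o2_x0_a11 S hiso hsum []]
    simp only [mul_assoc]
    rw [sx1_101 [1], o2_x0_a11 S hiso hsum [0,1], sx1_101 [], sx0_1 [1,0],
      o2_x1_a111 S hiso hsum [0], o2_x1_a110 S hiso hsum []]
    all_goals simp only [o2_sw_cons, o2_sw_nil, mul_one, one_mul, mul_assoc]
  · rw [o2_y_fix S hiso hsum (o2_sw_orth S hiso hsum [1,0] [1,1] (by decide) (by decide))]
    simp only [mul_assoc]
    rw [sx1_11 [], o2_x0_a11 S hiso hsum [1], sx1_11 [], sx0_1 [1,1],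
      o2_x1_a111 S hiso hsum [1], o2_x1_a111 S hiso hsum []]
    all_goals simp only [o2_sw_cons, o2_sw_nil, mul_one, one_mul, mul_assoc]

lemma o2_seed0_mem : o2_y S [0] ∈ Fgrp S := by
  rw [o2_seed0 S hiso hsum]
  exact mul_mem (o2_mem_x S 0) (mul_mem (o2_mem_x S 0)
    (mul_mem (o2_mem_xstar S 1) (o2_mem_xstar S 0)))

lemma o2_seed10_mem : o2_y S [1,0] ∈ Fgrp S := by
  rw [o2_seed10 S hiso hsum]
  exact mul_mem (o2_mem_x S 1) (mul_mem (o2_mem_x S 1) (mul_mem (o2_mem_xstar S 0)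
    (mul_mem (o2_mem_xstar S 1) (mul_mem (o2_mem_x S 0) (o2_mem_xstar S 1)))))

lemma o2_y_mem21 (σ : List (Fin 2)) : o2_y S (1::0::σ) ∈ Fgrp S := by
  induction σ with
  | nil => exact o2_seed10_mem S hiso hsum
  | cons a τ ih =>
    have ha : a = 0 ∨ a = 1 := by omega
    rcases ha with rfl | rfl
    · exact o2_conj_mem S hiso hsum (o2_mem_x S 1) (o2_x1_a10 S hiso hsum τ) ih
    · have h1 : o2_y S (1::1::0::τ) ∈ Fgrp S :=
        o2_conj_mem S hiso hsum (o2_mem_xstar S 0)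
          (o2_star_act S hiso hsum (o2_x0_ul S hiso hsum) (o2_x0_a11 S hiso hsum (0::τ))) ih
      exact o2_conj_mem S hiso hsum (o2_mem_x S 1) (o2_x1_a110 S hiso hsum τ) h1

lemma o2_y_mem (μ : List (Fin 2)) : o2_y S μ ∈ Fgrp S := by
  induction μ with
  | nil => rw [o2_y_nil S hiso hsum]; exact o2_mem_x S 0
  | cons a τ ih =>
    have ha : a = 0 ∨ a = 1 := by omega
    rcases τ with _ | ⟨b, ρ⟩
    · rcases ha with rfl | rfl
      · exact o2_seed0_mem S hiso hsum
      · rw [o2_y_one S hiso hsum]; exact o2_mem_x S 1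
    · have hb : b = 0 ∨ b = 1 := by omega
      rcases ha with rfl | rfl <;> rcases hb with rfl | rfl
      · exact o2_conj_mem S hiso hsum (o2_mem_x S 0) (o2_x0_a0 S hiso hsum ρ) ih
      · exact o2_conj_mem S hiso hsum (o2_mem_x S 0) (o2_x0_a10 S hiso hsum ρ)
          (o2_y_mem21 S hiso hsum ρ)
      · exact o2_y_mem21 S hiso hsum ρ
      · exact o2_conj_mem S hiso hsum (o2_mem_xstar S 0)
          (o2_star_act S hiso hsum (o2_x0_ul S hiso hsum) (o2_x0_a11 S hiso hsum ρ)) ih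

omit hiso hsum

lemma o2_pw_mem_Ddiag (μ : List (Fin 2)) : Pw S μ ∈ Ddiag S :=
  Submodule.le_topologicalClosure _ (Submodule.subset_span ⟨μ, rfl⟩)

include hiso hsum

lemma o2_Ddiag_comm {x : A} (hx : x ∈ Ddiag S) (μ : List (Fin 2)) :
    x * Pw S μ = Pw S μ * x := by
  set c := Pw S μ with hc
  let f : A →L[ℂ] A := ContinuousLinearMap.mul ℂ A c - (ContinuousLinearMap.mul ℂ A).flip c
  have hfapp : ∀ y, f y = c * y - y * c := by
    intro y
    simp [f, ContinuousLinearMap.sub_apply, ContinuousLinearMap.mul_apply',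
      ContinuousLinearMap.flip_apply]
  have hle : (Submodule.span ℂ (Set.range (Pw S))).topologicalClosure ≤ LinearMap.ker (f : A →ₗ[ℂ] A) := by
    apply Submodule.topologicalClosure_minimal
    · rw [Submodule.span_le]
      rintro y ⟨ν, rfl⟩
      simp only [SetLike.mem_coe, LinearMap.mem_ker, ContinuousLinearMap.coe_coe, hfapp]
      rw [hc, o2_pw_comm S hiso hsum μ ν, sub_self]
    · exact ContinuousLinearMap.isClosed_ker f
  have h0 := hle hx
  rw [LinearMap.mem_ker, ContinuousLinearMap.coe_coe, hfapp] at h0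
  exact (sub_eq_zero.mp h0).symm

lemma o2_compress_pw (ν : List (Fin 2)) : ∀ μ : List (Fin 2),
    star (Sw S ν) * Pw S μ * Sw S ν = 0 ∨
      ∃ τ, star (Sw S ν) * Pw S μ * Sw S ν = Pw S τ := by
  induction ν with
  | nil =>
    intro μ
    right; exact ⟨μ, by simp [o2_sw_nil]⟩
  | cons a ν ih =>
    intro μ
    match μ with
    | [] =>
      right; refine ⟨[], ?_⟩
      simp [o2_pw_nil, o2_sw_isometry S hiso hsum]
    | b :: μ =>
      by_cases hab : a = b
      · subst hab
        have e1 : star (Sw S (a::ν)) = star (Sw S ν) * star (S a) := by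
          rw [o2_sw_cons, star_mul]
        have e2 : Pw S (a::μ) = S a * (Pw S μ * star (S a)) := by
          rw [Pw, Pw, o2_sw_cons, star_mul]; noncomm_ring
        have hred : star (Sw S (a::ν)) * Pw S (a::μ) * Sw S (a::ν)
            = star (Sw S ν) * Pw S μ * Sw S ν := by
          rw [e1, e2, o2_sw_cons]
          calc star (Sw S ν) * star (S a) * (S a * (Pw S μ * star (S a))) * (S a * Sw S ν)
              = star (Sw S ν) * (star (S a) * (S a * (Pw S μ
                  * (star (S a) * (S a * Sw S ν))))) := by noncomm_ring
            _ = star (Sw S ν) * (Pw S μ * Sw S ν) := by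
                rw [o2_dsame S hiso hsum, o2_dsame S hiso hsum]
            _ = star (Sw S ν) * Pw S μ * Sw S ν := by rw [mul_assoc]
        rw [hred]; exact ih μ
      · left
        have hz : star (Sw S (a::ν)) * Sw S (b::μ) = 0 := by
          rw [o2_sw_cons, o2_sw_cons, star_mul, mul_assoc, o2_dne S hiso hsum hab, mul_zero]
        rw [Pw]
        calc star (Sw S (a::ν)) * (Sw S (b::μ) * star (Sw S (b::μ))) * Sw S (a::ν)
            = (star (Sw S (a::ν)) * Sw S (b::μ)) * (star (Sw S (b::μ)) * Sw S (a::ν)) := by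
              noncomm_ring
          _ = 0 := by rw [hz, zero_mul]

lemma o2_Ddiag_compress {x : A} (hx : x ∈ Ddiag S) (ν : List (Fin 2)) :
    star (Sw S ν) * x * Sw S ν ∈ Ddiag S := by
  set D := (Submodule.span ℂ (Set.range (Pw S))).topologicalClosure with hD
  let φ : A →L[ℂ] A := ((ContinuousLinearMap.mul ℂ A).flip (Sw S ν)).comp
    (ContinuousLinearMap.mul ℂ A (star (Sw S ν)))
  have hφapp : ∀ y, φ y = star (Sw S ν) * y * Sw S ν := by
    intro y
    simp [φ, ContinuousLinearMap.comp_apply, ContinuousLinearMap.mul_apply',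
      ContinuousLinearMap.flip_apply]
  have hle : D ≤ Submodule.comap (φ : A →ₗ[ℂ] A) D := by
    apply Submodule.topologicalClosure_minimal
    · rw [Submodule.span_le]
      rintro y ⟨μ, rfl⟩
      simp only [SetLike.mem_coe, Submodule.mem_comap, ContinuousLinearMap.coe_coe]
      rw [hφapp]
      rcases o2_compress_pw S hiso hsum ν μ with h | ⟨τ, h⟩
      · rw [h]; exact zero_mem _
      · rw [h]; exact o2_pw_mem_Ddiag S τ
    · rw [show ((Submodule.comap (φ : A →ₗ[ℂ] A) D : Submodule ℂ A) : Set A)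
          = φ ⁻¹' (D : Set A) from rfl]
      exact (Submodule.isClosed_topologicalClosure _).preimage φ.continuous
  have h0 := hle hx
  rw [Submodule.mem_comap] at h0
  rw [show ((φ : A →ₗ[ℂ] A) x : A) = φ x from rfl, hφapp] at h0
  exact h0

lemma o2_Ddiag_mulPw {x : A} (hx : x ∈ Ddiag S) (μ : List (Fin 2)) :
    x * Pw S μ ∈ Ddiag S := by
  set D := (Submodule.span ℂ (Set.range (Pw S))).topologicalClosure with hD
  let φ : A →L[ℂ] A := (ContinuousLinearMap.mul ℂ A).flip (Pw S μ)
  have hφapp : ∀ y, φ y = y * Pw S μ := by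
    intro y
    simp [φ, ContinuousLinearMap.mul_apply', ContinuousLinearMap.flip_apply]
  have hle : D ≤ Submodule.comap (φ : A →ₗ[ℂ] A) D := by
    apply Submodule.topologicalClosure_minimal
    · rw [Submodule.span_le]
      rintro y ⟨ν, rfl⟩
      simp only [SetLike.mem_coe, Submodule.mem_comap, ContinuousLinearMap.coe_coe]
      rw [hφapp]
      by_cases h : ν <+: μ
      · rw [o2_pw_of_prefix S hiso hsum h]; exact o2_pw_mem_Ddiag S μ
      · by_cases h' : μ <+: ν
        · rw [o2_pw_of_prefix' S hiso hsum h']; exact o2_pw_mem_Ddiag S ν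
        · rw [o2_pw_orth S hiso hsum h h']; exact zero_mem _
    · rw [show ((Submodule.comap (φ : A →ₗ[ℂ] A) D : Submodule ℂ A) : Set A)
          = φ ⁻¹' (D : Set A) from rfl]
      exact (Submodule.isClosed_topologicalClosure _).preimage φ.continuous
  have h0 := hle hx
  rw [Submodule.mem_comap] at h0
  rw [show ((φ : A →ₗ[ℂ] A) x : A) = φ x from rfl, hφapp] at h0
  exact h0

omit hiso hsum in
lemma o2_proj_norm_sq {e : A} (hsa : star e = e) (hid : e * e = e) : ‖e‖ * ‖e‖ = ‖e‖ := by
  have h := CStarRing.norm_star_mul_self (x := e)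
  rw [hsa, hid] at h
  linarith

omit hiso hsum in
lemma o2_proj_norm_one {e : A} (hne : e ≠ 0) (hsa : star e = e) (hid : e * e = e) :
    ‖e‖ = 1 := by
  have h := o2_proj_norm_sq (A := A) hsa hid
  have h0 : ‖e‖ ≠ 0 := norm_ne_zero_iff.mpr hne
  exact mul_right_cancel₀ h0 (h.trans (one_mul _).symm)

omit hiso hsum in
lemma o2_proj_norm_le_one {e : A} (hsa : star e = e) (hid : e * e = e) : ‖e‖ ≤ 1 := by
  by_cases h0 : e = 0
  · rw [h0]; simp
  · rw [o2_proj_norm_one (A := A) h0 hsa hid]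

lemma o2_pw_ne_zero (hone : (1:A) ≠ 0) (μ : List (Fin 2)) : Pw S μ ≠ 0 := by
  intro h
  apply hone
  have : star (Sw S μ) * Pw S μ * Sw S μ = 1 := by
    rw [Pw, show star (Sw S μ) * (Sw S μ * star (Sw S μ)) * Sw S μ
        = (star (Sw S μ) * Sw S μ) * (star (Sw S μ) * Sw S μ) from by noncomm_ring,
      o2_sw_isometry S hiso hsum, one_mul]
  rw [h, mul_zero, zero_mul] at this
  exact this.symm

lemma o2_pw_norm (hone : (1:A) ≠ 0) (μ : List (Fin 2)) : ‖Pw S μ‖ = 1 :=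
  o2_proj_norm_one (A := A) (o2_pw_ne_zero S hiso hsum hone μ) (o2_pw_star S μ)
    (o2_pw_idem S hiso hsum μ)

omit hiso hsum in
lemma o2_prefix_rep {μ : List (Fin 2)} {m : ℕ} (c e : Fin 2) (hlen : μ.length ≤ m) :
    (μ <+: (List.replicate m c ++ [e])) ↔ μ = List.replicate μ.length c := by
  rw [List.prefix_iff_eq_take, List.take_append_of_le_length (by simpa using hlen),
    List.take_replicate, min_eq_left hlen]

lemma o2_scalar_mul (cf : List (Fin 2) →₀ ℂ) {m : ℕ} (hm : ∀ μ ∈ cf.support, μ.length ≤ m)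
    (c e : Fin 2) :
    (cf.sum fun μ a => a • Pw S μ) * Pw S (List.replicate m c ++ [e])
      = (∑ μ ∈ cf.support.filter (fun μ => μ = List.replicate μ.length c), cf μ)
          • Pw S (List.replicate m c ++ [e]) := by
  rw [Finsupp.sum, Finset.sum_mul]
  rw [show (∑ μ ∈ cf.support, (cf μ • Pw S μ) * Pw S (List.replicate m c ++ [e]))
      = ∑ μ ∈ cf.support, (if μ = List.replicate μ.length c
          then cf μ • Pw S (List.replicate m c ++ [e]) else 0) from
    Finset.sum_congr rfl ?_, Finset.sum_ite, Finset.sum_const_zero, add_zero, Finset.sum_smul]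
  intro μ hμ
  by_cases h : μ = List.replicate μ.length c
  · rw [if_pos h, smul_mul_assoc,
      o2_pw_of_prefix S hiso hsum ((o2_prefix_rep c e (hm μ hμ)).mpr h)]
  · rw [if_neg h, smul_mul_assoc,
      o2_pw_orth S hiso hsum
        (fun hp => h ((o2_prefix_rep c e (hm μ hμ)).mp hp))
        (fun hp => by
          have h1 := hp.length_le
          have h2 := hm μ hμ
          simp only [List.length_append, List.length_replicate, List.length_singleton] at h1
          omega),
      smul_zero]

lemma o2_deep (hone : (1:A) ≠ 0) {r : A} (hr : r ∈ Ddiag S) (hsa : star r = r)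
    (hid : r * r = r) (c : Fin 2)
    (hdeep : ∀ n, r * Pw S (List.replicate n c) = r) : r = 0 := by
  by_contra hne
  have hnorm : ‖r‖ = 1 := o2_proj_norm_one (A := A) hne hsa hid
  have h1 : r ∈ ((Submodule.span ℂ (Set.range (Pw S))).topologicalClosure : Set A) := hr
  rw [Submodule.topologicalClosure_coe] at h1
  obtain ⟨x, hxspan, hxdist⟩ := Metric.mem_closure_iff.mp h1 (1/3) (by norm_num)
  rw [SetLike.mem_coe] at hxspan
  obtain ⟨cf, rfl⟩ := Finsupp.mem_span_range_iff_exists_finsupp.mp hxspan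
  set x := cf.sum fun μ a => a • Pw S μ with hx
  set m := cf.support.sup List.length with hmdef
  have hm : ∀ μ ∈ cf.support, μ.length ≤ m := fun μ hμ => Finset.le_sup hμ
  set d : Fin 2 := if c = 0 then 1 else 0 with hd
  have hcd : c ≠ d := by
    rcases (by omega : c = 0 ∨ c = 1) with rfl | rfl <;> simp [hd]
  set w1 := List.replicate m c ++ [c] with hw1
  set w2 := List.replicate m c ++ [d] with hw2
  set t := ∑ μ ∈ cf.support.filter (fun μ => μ = List.replicate μ.length c), cf μ with ht
  have hx1 : x * Pw S w1 = t • Pw S w1 := o2_scalar_mul S hiso hsum cf hm c c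
  have hx2 : x * Pw S w2 = t • Pw S w2 := o2_scalar_mul S hiso hsum cf hm c d
  have hr1 : r * Pw S w1 = r := by
    rw [hw1, ← List.replicate_succ']; exact hdeep (m+1)
  have hw12 : ¬ w1 <+: w2 := by
    intro hp
    have hlen : w1.length = w2.length := by simp [hw1, hw2]
    have := hp.eq_of_length hlen
    rw [hw1, hw2] at this
    exact hcd (by simpa using List.append_cancel_left this)
  have hw21 : ¬ w2 <+: w1 := by
    intro hp
    have hlen : w2.length = w1.length := by simp [hw1, hw2]
    have := hp.eq_of_length hlen
    rw [hw1, hw2] at this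
    exact hcd (by simpa using (List.append_cancel_left this).symm)
  have hr2 : r * Pw S w2 = 0 := by
    calc r * Pw S w2 = (r * Pw S w1) * Pw S w2 := by rw [hr1]
      _ = r * (Pw S w1 * Pw S w2) := by rw [mul_assoc]
      _ = 0 := by rw [o2_pw_orth S hiso hsum hw12 hw21, mul_zero]
  have hPw1 : ‖Pw S w1‖ = 1 := o2_pw_norm S hiso hsum hone w1
  have hPw2 : ‖Pw S w2‖ = 1 := o2_pw_norm S hiso hsum hone w2
  have htle : ‖t‖ ≤ dist r x := by
    have heq : t • Pw S w2 = (x - r) * Pw S w2 := by rw [sub_mul, hx2, hr2, sub_zero]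
    calc ‖t‖ = ‖t • Pw S w2‖ := by rw [norm_smul, hPw2, mul_one]
      _ = ‖(x - r) * Pw S w2‖ := by rw [heq]
      _ ≤ ‖x - r‖ * ‖Pw S w2‖ := norm_mul_le _ _
      _ = ‖x - r‖ := by rw [hPw2, mul_one]
      _ = dist r x := by rw [dist_eq_norm, norm_sub_rev]
  have hfinal : ‖r‖ < 1 := by
    have hdec : r = (r - x) * Pw S w1 + t • Pw S w1 := by
      rw [sub_mul, hx1, hr1]; abel
    calc ‖r‖ = ‖(r - x) * Pw S w1 + t • Pw S w1‖ := by rw [← hdec]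
      _ ≤ ‖(r - x) * Pw S w1‖ + ‖t • Pw S w1‖ := norm_add_le _ _
      _ ≤ ‖r - x‖ * ‖Pw S w1‖ + ‖t‖ * ‖Pw S w1‖ := by
          gcongr
          · exact norm_mul_le _ _
          · rw [norm_smul]
      _ = ‖r - x‖ + ‖t‖ := by rw [hPw1, mul_one, mul_one]
      _ < 1/3 + 1/3 := by
          have : ‖r - x‖ = dist r x := by rw [dist_eq_norm]
          gcongr <;> [rw [this]; skip] <;> [exact hxdist; exact lt_of_le_of_lt htle hxdist]
      _ < 1 := by norm_num
  rw [hnorm] at hfinal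
  exact lt_irrefl 1 hfinal

lemma o2_qx0 (hone : (1:A) ≠ 0) {q : A} (hq : q ∈ Ddiag S) (hsa : star q = q)
    (hid : q * q = q) (hfix : q * x0 S = q) : q = 0 := by
  have hA0 : ∀ n, q * Sw S (List.replicate (n+1) 0) = q * Sw S [0] := by
    intro n
    induction n with
    | zero => rfl
    | succ n ih =>
      have e1 : List.replicate (n+1) (0 : Fin 2) = 0 :: List.replicate n 0 := List.replicate_succ
      have e2 : List.replicate (n+1+1) (0 : Fin 2) = 0 :: 0 :: List.replicate n 0 := by
        rw [List.replicate_succ, List.replicate_succ]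
      calc q * Sw S (List.replicate (n+1+1) 0)
          = q * (x0 S * Sw S (List.replicate (n+1) 0)) := by
            rw [e1, e2, o2_x0_a0 S hiso hsum]
        _ = (q * x0 S) * Sw S (List.replicate (n+1) 0) := by rw [mul_assoc]
        _ = q * Sw S (List.replicate (n+1) 0) := by rw [hfix]
        _ = q * Sw S [0] := ih
  have hA1 : ∀ n, q * Sw S (List.replicate (n+1) 1) = q * Sw S [1] := by
    intro n
    induction n with
    | zero => rfl
    | succ n ih =>
      have e1 : List.replicate (n+1) (1 : Fin 2) = 1 :: List.replicate n 1 := List.replicate_succ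
      have e2 : List.replicate (n+1+1) (1 : Fin 2) = 1 :: 1 :: List.replicate n 1 := by
        rw [List.replicate_succ, List.replicate_succ]
      calc q * Sw S (List.replicate (n+1+1) 1)
          = (q * x0 S) * Sw S (List.replicate (n+1+1) 1) := by rw [hfix]
        _ = q * (x0 S * Sw S (List.replicate (n+1+1) 1)) := by rw [mul_assoc]
        _ = q * Sw S (List.replicate (n+1) 1) := by
            rw [e2, o2_x0_a11 S hiso hsum, e1]
        _ = q * Sw S [1] := ih
  have hproj : ∀ w : List (Fin 2), q * Pw S w * q = q * Pw S w := by
    intro w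
    calc q * Pw S w * q = Pw S w * q * q := by rw [o2_Ddiag_comm S hiso hsum hq w]
      _ = Pw S w * (q * q) := by rw [mul_assoc]
      _ = Pw S w * q := by rw [hid]
      _ = q * Pw S w := (o2_Ddiag_comm S hiso hsum hq w).symm
  have hPeq : ∀ v w : List (Fin 2), q * Sw S v = q * Sw S w →
      q * Pw S v = q * Pw S w := by
    intro v w h
    have hh : (q * Sw S v) * star (q * Sw S v) = (q * Sw S w) * star (q * Sw S w) := by
      rw [h]
    rw [star_mul, star_mul, hsa] at hh
    have ev : q * Sw S v * (star (Sw S v) * q) = q * Pw S v * q := by rw [Pw]; noncomm_ring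
    have ew : q * Sw S w * (star (Sw S w) * q) = q * Pw S w * q := by rw [Pw]; noncomm_ring
    rw [ev, ew] at hh
    calc q * Pw S v = q * Pw S v * q := (hproj v).symm
      _ = q * Pw S w * q := hh
      _ = q * Pw S w := hproj w
  have hdeep0 : ∀ n, (q * Pw S [0]) * Pw S (List.replicate n 0) = q * Pw S [0] := by
    intro n
    cases n with
    | zero => simp [o2_pw_nil]
    | succ n =>
      have hpre : ([0] : List (Fin 2)) <+: List.replicate (n+1) 0 := by
        rw [List.replicate_succ]
        exact List.cons_prefix_cons.mpr ⟨rfl, List.nil_prefix⟩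
      calc q * Pw S [0] * Pw S (List.replicate (n+1) 0)
          = q * (Pw S [0] * Pw S (List.replicate (n+1) 0)) := by rw [mul_assoc]
        _ = q * Pw S (List.replicate (n+1) 0) := by rw [o2_pw_of_prefix S hiso hsum hpre]
        _ = q * Pw S [0] := hPeq _ _ (hA0 n)
  have hdeep1 : ∀ n, (q * Pw S [1]) * Pw S (List.replicate n 1) = q * Pw S [1] := by
    intro n
    cases n with
    | zero => simp [o2_pw_nil]
    | succ n =>
      have hpre : ([1] : List (Fin 2)) <+: List.replicate (n+1) 1 := by
        rw [List.replicate_succ]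
        exact List.cons_prefix_cons.mpr ⟨rfl, List.nil_prefix⟩
      calc q * Pw S [1] * Pw S (List.replicate (n+1) 1)
          = q * (Pw S [1] * Pw S (List.replicate (n+1) 1)) := by rw [mul_assoc]
        _ = q * Pw S (List.replicate (n+1) 1) := by rw [o2_pw_of_prefix S hiso hsum hpre]
        _ = q * Pw S [1] := hPeq _ _ (hA1 n)
  have hsa0 : star (q * Pw S [0]) = q * Pw S [0] := by
    rw [star_mul, o2_pw_star, hsa, ← o2_Ddiag_comm S hiso hsum hq]
  have hsa1 : star (q * Pw S [1]) = q * Pw S [1] := by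
    rw [star_mul, o2_pw_star, hsa, ← o2_Ddiag_comm S hiso hsum hq]
  have hid0 : (q * Pw S [0]) * (q * Pw S [0]) = q * Pw S [0] := by
    calc q * Pw S [0] * (q * Pw S [0]) = (q * Pw S [0] * q) * Pw S [0] := by
          rw [mul_assoc, mul_assoc, mul_assoc]
      _ = (q * Pw S [0]) * Pw S [0] := by rw [hproj]
      _ = q * (Pw S [0] * Pw S [0]) := by rw [mul_assoc]
      _ = q * Pw S [0] := by rw [o2_pw_idem S hiso hsum]
  have hid1 : (q * Pw S [1]) * (q * Pw S [1]) = q * Pw S [1] := by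
    calc q * Pw S [1] * (q * Pw S [1]) = (q * Pw S [1] * q) * Pw S [1] := by
          rw [mul_assoc, mul_assoc, mul_assoc]
      _ = (q * Pw S [1]) * Pw S [1] := by rw [hproj]
      _ = q * (Pw S [1] * Pw S [1]) := by rw [mul_assoc]
      _ = q * Pw S [1] := by rw [o2_pw_idem S hiso hsum]
  have hz0 : q * Pw S [0] = 0 :=
    o2_deep S hiso hsum hone (o2_Ddiag_mulPw S hiso hsum hq [0]) hsa0 hid0 0 hdeep0
  have hz1 : q * Pw S [1] = 0 :=
    o2_deep S hiso hsum hone (o2_Ddiag_mulPw S hiso hsum hq [1]) hsa1 hid1 1 hdeep1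
  calc q = q * (Pw S [0] + Pw S [1]) := by rw [o2_pw_one S hiso hsum, mul_one]
    _ = q * Pw S [0] + q * Pw S [1] := by rw [mul_add]
    _ = 0 := by rw [hz0, hz1, add_zero]

end O2

theorem stmt_11 {A : Type*} [CStarAlgebra A] [PartialOrder A] [StarOrderedRing A]
    (S : Fin 2 → A)
    (hiso : ∀ i, star (S i) * S i = 1)
    (hsum : S 0 * star (S 0) + S 1 * star (S 1) = 1)
    (hgen : (StarAlgebra.adjoin ℂ (Set.range S)).topologicalClosure = ⊤)
    (p : A) (L M : Finset (List (Fin 2)))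
    (hL : ∀ μ ∈ L, ∀ ν ∈ L, μ ≠ ν → Pw S μ * Pw S ν = 0)
    (hpL : p = ∑ μ ∈ L, Pw S μ)
    (hM : ∀ μ ∈ M, ∀ ν ∈ M, μ ≠ ν → Pw S μ * Pw S ν = 0)
    (hpM : 1 - p = ∑ μ ∈ M, Pw S μ) :
    ∃ w : A, w ∈ Fgrp S ∧ w ∈ unitary A ∧ IsOneW S w p := by
  classical
  by_cases hone : (1 : A) = 0
  · have hall : ∀ a b : A, a = b := by
      intro a b
      calc a = a * 1 := (mul_one a).symm
        _ = 0 := by rw [hone, mul_zero]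
        _ = b * 1 := by rw [hone, mul_zero]
        _ = b := mul_one b
    refine ⟨1, one_mem _, one_mem _, ?_, ⟨hall _ _, hall _ _⟩, mul_one p, ?_⟩
    · rw [hall p 0]; exact zero_mem _
    · intro p' _ _ _
      rw [hall p' p]
  · -- nontrivial algebra
    -- membership of the product in F
    have hFgrp : ∀ N : Finset (List (Fin 2)),
        (∀ μ ∈ N, ∀ ν ∈ N, μ ≠ ν → Pw S μ * Pw S ν = 0) →
        ((1 - ∑ μ ∈ N, Pw S μ) + ∑ μ ∈ N, Sw S μ * (x0 S * star (Sw S μ))) ∈ Fgrp S := by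
      intro N
      induction N using Finset.induction_on with
      | empty =>
        intro _
        simp only [Finset.sum_empty, sub_zero, add_zero]
        exact one_mem _
      | @insert ν N hν ih =>
        intro horth
        have horthN : ∀ μ ∈ N, ∀ ρ ∈ N, μ ≠ ρ → Pw S μ * Pw S ρ = 0 := fun μ hμ ρ hρ =>
          horth μ (Finset.mem_insert_of_mem hμ) ρ (Finset.mem_insert_of_mem hρ)
        have hmemN := ih horthN
        have hPν : ∀ μ ∈ N, Pw S ν * Pw S μ = 0 := fun μ hμ =>
          horth ν (Finset.mem_insert_self ν N) μ (Finset.mem_insert_of_mem hμ)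
            (fun e => hν (e ▸ hμ))
        have hPb : Pw S ν * (∑ μ ∈ N, Pw S μ) = 0 := by
          rw [Finset.mul_sum]; exact Finset.sum_eq_zero hPν
        have hPc : Pw S ν * (∑ μ ∈ N, Sw S μ * (x0 S * star (Sw S μ))) = 0 := by
          rw [Finset.mul_sum]
          apply Finset.sum_eq_zero
          intro μ hμ
          have hz : star (Sw S ν) * Sw S μ = 0 := o2_sw_orth_of_pw S hiso hsum (hPν μ hμ)
          calc Pw S ν * (Sw S μ * (x0 S * star (Sw S μ)))
              = Sw S ν * ((star (Sw S ν) * Sw S μ) * (x0 S * star (Sw S μ))) := by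
                rw [Pw]; noncomm_ring
            _ = 0 := by rw [hz, zero_mul, mul_zero]
        have haPb : (Sw S ν * (x0 S * star (Sw S ν))) * (∑ μ ∈ N, Pw S μ) = 0 := by
          rw [Finset.mul_sum]
          apply Finset.sum_eq_zero
          intro μ hμ
          have hz : star (Sw S ν) * Sw S μ = 0 := o2_sw_orth_of_pw S hiso hsum (hPν μ hμ)
          calc (Sw S ν * (x0 S * star (Sw S ν))) * Pw S μ
              = Sw S ν * (x0 S * ((star (Sw S ν) * Sw S μ) * star (Sw S μ))) := by
                rw [Pw]; noncomm_ring
            _ = 0 := by rw [hz, zero_mul, mul_zero, mul_zero]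
        have haPc : (Sw S ν * (x0 S * star (Sw S ν)))
            * (∑ μ ∈ N, Sw S μ * (x0 S * star (Sw S μ))) = 0 := by
          rw [Finset.mul_sum]
          apply Finset.sum_eq_zero
          intro μ hμ
          have hz : star (Sw S ν) * Sw S μ = 0 := o2_sw_orth_of_pw S hiso hsum (hPν μ hμ)
          calc (Sw S ν * (x0 S * star (Sw S ν))) * (Sw S μ * (x0 S * star (Sw S μ)))
              = Sw S ν * (x0 S * ((star (Sw S ν) * Sw S μ) * (x0 S * star (Sw S μ)))) := by
                noncomm_ring
            _ = 0 := by rw [hz, zero_mul, mul_zero, mul_zero]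
        have hexp : o2_y S ν * ((1 - ∑ μ ∈ N, Pw S μ)
              + ∑ μ ∈ N, Sw S μ * (x0 S * star (Sw S μ)))
            = (1 - ∑ μ ∈ insert ν N, Pw S μ)
              + ∑ μ ∈ insert ν N, Sw S μ * (x0 S * star (Sw S μ)) := by
          rw [Finset.sum_insert hν, Finset.sum_insert hν, o2_y]
          have e : (1 - Pw S ν + Sw S ν * (x0 S * star (Sw S ν)))
              * ((1 - ∑ μ ∈ N, Pw S μ) + ∑ μ ∈ N, Sw S μ * (x0 S * star (Sw S μ)))
              = ((1 - ∑ μ ∈ N, Pw S μ) + ∑ μ ∈ N, Sw S μ * (x0 S * star (Sw S μ)))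
                - (Pw S ν - Pw S ν * (∑ μ ∈ N, Pw S μ)
                   + Pw S ν * (∑ μ ∈ N, Sw S μ * (x0 S * star (Sw S μ))))
                + ((Sw S ν * (x0 S * star (Sw S ν)))
                   - (Sw S ν * (x0 S * star (Sw S ν))) * (∑ μ ∈ N, Pw S μ)
                   + (Sw S ν * (x0 S * star (Sw S ν)))
                     * (∑ μ ∈ N, Sw S μ * (x0 S * star (Sw S μ)))) := by
            noncomm_ring
          rw [e, hPb, hPc, haPb, haPc]
          abel
        rw [← hexp]
        exact mul_mem (o2_y_mem S hiso hsum ν) hmemN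
    have hwF := hFgrp M hM
    set w : A := (1 - ∑ μ ∈ M, Pw S μ) + ∑ μ ∈ M, Sw S μ * (x0 S * star (Sw S μ)) with hwdef
    have hpb : p = 1 - ∑ μ ∈ M, Pw S μ := by rw [← hpM, sub_sub_cancel]
    -- auxiliary sums facts
    have hbb : (∑ μ ∈ M, Pw S μ) * (∑ ρ ∈ M, Pw S ρ) = ∑ μ ∈ M, Pw S μ := by
      rw [Finset.sum_mul_sum]
      apply Finset.sum_congr rfl
      intro μ hμ
      rw [Finset.sum_eq_single μ
        (fun ρ hρ hne => hM μ hμ ρ hρ (fun e => hne (e ▸ rfl)))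
        (fun h => absurd hμ h)]
      exact o2_pw_idem S hiso hsum μ
    have hbc : (∑ μ ∈ M, Pw S μ) * (∑ ρ ∈ M, Sw S ρ * (x0 S * star (Sw S ρ)))
        = ∑ ρ ∈ M, Sw S ρ * (x0 S * star (Sw S ρ)) := by
      rw [Finset.sum_mul_sum, Finset.sum_comm]
      apply Finset.sum_congr rfl
      intro ρ hρ
      rw [Finset.sum_eq_single ρ ?_ (fun h => absurd hρ h)]
      · calc Pw S ρ * (Sw S ρ * (x0 S * star (Sw S ρ)))
            = (Pw S ρ * Sw S ρ) * (x0 S * star (Sw S ρ)) := by rw [mul_assoc]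
          _ = Sw S ρ * (x0 S * star (Sw S ρ)) := by rw [o2_pw_sw S hiso hsum]
      · intro μ hμ hne
        have hz : star (Sw S μ) * Sw S ρ = 0 :=
          o2_sw_orth_of_pw S hiso hsum (hM μ hμ ρ hρ hne)
        calc Pw S μ * (Sw S ρ * (x0 S * star (Sw S ρ)))
            = Sw S μ * ((star (Sw S μ) * Sw S ρ) * (x0 S * star (Sw S ρ))) := by
              rw [Pw]; noncomm_ring
          _ = 0 := by rw [hz, zero_mul, mul_zero]
    have hpw : p * w = p := by
      rw [hpb, hwdef]
      have e : (1 - ∑ μ ∈ M, Pw S μ) * ((1 - ∑ μ ∈ M, Pw S μ)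
            + ∑ μ ∈ M, Sw S μ * (x0 S * star (Sw S μ)))
          = 1 - ∑ μ ∈ M, Pw S μ - ∑ μ ∈ M, Pw S μ
            + (∑ μ ∈ M, Pw S μ) * (∑ ρ ∈ M, Pw S ρ)
            + (∑ μ ∈ M, Sw S μ * (x0 S * star (Sw S μ))
               - (∑ μ ∈ M, Pw S μ) * (∑ ρ ∈ M, Sw S ρ * (x0 S * star (Sw S ρ)))) := by
        noncomm_ring
      rw [e, hbb, hbc]
      abel
    refine ⟨w, hwF, o2_F_unitary S hiso hsum hwF, ?_, ?_, hpw, ?_⟩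
    · -- p ∈ Ddiag S
      rw [hpL]
      exact Submodule.sum_mem _ (fun μ _ => o2_pw_mem_Ddiag S μ)
    · -- IsProjection p
      constructor
      · show star p = p
        rw [hpL, star_sum]
        exact Finset.sum_congr rfl (fun μ _ => o2_pw_star S μ)
      · rw [hpL, Finset.sum_mul_sum]
        apply Finset.sum_congr rfl
        intro μ hμ
        rw [Finset.sum_eq_single μ
          (fun ρ hρ hne => hL μ hμ ρ hρ (fun e => hne (e ▸ rfl)))
          (fun h => absurd hμ h)]
        exact o2_pw_idem S hiso hsum μ
    · -- maximality
      intro p' hp'D hp'proj hp'w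
      obtain ⟨hp'sa, hp'id⟩ := hp'proj
      have hsa' : star p' = p' := hp'sa
      have hsap : star p = p := by
        rw [hpL, star_sum]
        exact Finset.sum_congr rfl (fun μ _ => o2_pw_star S μ)
      have hpp : p * p = p := by
        rw [hpL, Finset.sum_mul_sum]
        rw [show (∑ μ ∈ L, ∑ ρ ∈ L, Pw S μ * Pw S ρ) = ∑ μ ∈ L, Pw S μ from
          Finset.sum_congr rfl (fun μ hμ => by
            rw [Finset.sum_eq_single μ
              (fun ρ hρ hne => hL μ hμ ρ hρ (fun e => hne (e ▸ rfl)))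
              (fun h => absurd hμ h)]
            exact o2_pw_idem S hiso hsum μ)]
      have hPzero : ∀ ν ∈ M, p' * Pw S ν = 0 := by
        intro ν hν
        -- w * Pw ν = a_ν
        have hbP : (∑ μ ∈ M, Pw S μ) * Pw S ν = Pw S ν := by
          rw [Finset.sum_mul]
          rw [Finset.sum_eq_single ν
            (fun ρ hρ hne => hM ρ hρ ν hν hne) (fun h => absurd hν h)]
          exact o2_pw_idem S hiso hsum ν
        have hcP : (∑ μ ∈ M, Sw S μ * (x0 S * star (Sw S μ))) * Pw S ν
            = Sw S ν * (x0 S * star (Sw S ν)) := by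
          rw [Finset.sum_mul]
          rw [Finset.sum_eq_single ν ?_ (fun h => absurd hν h)]
          · calc Sw S ν * (x0 S * star (Sw S ν)) * Pw S ν
                = Sw S ν * (x0 S * (star (Sw S ν) * Pw S ν)) := by noncomm_ring
              _ = Sw S ν * (x0 S * star (Sw S ν)) := by rw [o2_starsw_pw S hiso hsum]
          · intro μ hμ hne
            have hz : star (Sw S μ) * Sw S ν = 0 :=
              o2_sw_orth_of_pw S hiso hsum (hM μ hμ ν hν hne)
            calc Sw S μ * (x0 S * star (Sw S μ)) * Pw S ν
                = Sw S μ * (x0 S * ((star (Sw S μ) * Sw S ν) * star (Sw S ν))) := by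
                  rw [Pw]; noncomm_ring
              _ = 0 := by rw [hz, zero_mul, mul_zero, mul_zero]
        have hwP : w * Pw S ν = Sw S ν * (x0 S * star (Sw S ν)) := by
          rw [hwdef, add_mul, sub_mul, one_mul, hbP, sub_self, zero_add, hcP]
        have hkey : p' * (Sw S ν * (x0 S * star (Sw S ν))) = p' * Pw S ν := by
          calc p' * (Sw S ν * (x0 S * star (Sw S ν))) = p' * (w * Pw S ν) := by rw [hwP]
            _ = (p' * w) * Pw S ν := by rw [mul_assoc]
            _ = p' * Pw S ν := by rw [hp'w]
        set q : A := star (Sw S ν) * p' * Sw S ν with hqdef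
        have hqx : q * x0 S = q := by
          have l : star (Sw S ν) * (p' * (Sw S ν * (x0 S * star (Sw S ν)))) * Sw S ν
              = q * x0 S := by
            calc star (Sw S ν) * (p' * (Sw S ν * (x0 S * star (Sw S ν)))) * Sw S ν
                = (star (Sw S ν) * p' * Sw S ν) * x0 S
                  * (star (Sw S ν) * Sw S ν) := by noncomm_ring
              _ = q * x0 S := by rw [o2_sw_isometry S hiso hsum, mul_one, hqdef]
          have r : star (Sw S ν) * (p' * Pw S ν) * Sw S ν = q := by
            calc star (Sw S ν) * (p' * Pw S ν) * Sw S ν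
                = star (Sw S ν) * p' * (Pw S ν * Sw S ν) := by noncomm_ring
              _ = q := by rw [o2_pw_sw S hiso hsum, hqdef]
          rw [← l, ← r, hkey]
        have hqD : q ∈ Ddiag S := o2_Ddiag_compress S hiso hsum hp'D ν
        have hqsa : star q = q := by
          rw [hqdef, star_mul, star_mul, star_star, hsa', mul_assoc]
        have hqid : q * q = q := by
          have e1 : q * q = star (Sw S ν) * (p' * (Pw S ν * p')) * Sw S ν := by
            rw [hqdef, Pw]; noncomm_ring
          have e2 : star (Sw S ν) * (p' * (Pw S ν * p')) * Sw S ν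
              = star (Sw S ν) * ((p' * p') * Pw S ν) * Sw S ν := by
            rw [← o2_Ddiag_comm S hiso hsum hp'D ν]
            noncomm_ring
          have e3 : star (Sw S ν) * ((p' * p') * Pw S ν) * Sw S ν
              = star (Sw S ν) * (p' * Pw S ν) * Sw S ν := by rw [hp'id]
          have e4 : star (Sw S ν) * (p' * Pw S ν) * Sw S ν = q := by
            calc star (Sw S ν) * (p' * Pw S ν) * Sw S ν
                = star (Sw S ν) * p' * (Pw S ν * Sw S ν) := by noncomm_ring
              _ = q := by rw [o2_pw_sw S hiso hsum, hqdef]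
          rw [e1, e2, e3, e4]
        have hq0 : q = 0 := o2_qx0 S hiso hsum hone hqD hqsa hqid hqx
        have hPpP : Pw S ν * p' * Pw S ν = 0 := by
          have e : Sw S ν * q * star (Sw S ν) = Pw S ν * p' * Pw S ν := by
            rw [hqdef, Pw]; noncomm_ring
          rw [← e, hq0, mul_zero, zero_mul]
        have hPp : Pw S ν * p' = 0 := by
          calc Pw S ν * p' = (Pw S ν * Pw S ν) * p' := by rw [o2_pw_idem S hiso hsum]
            _ = Pw S ν * (Pw S ν * p') := by rw [mul_assoc]
            _ = Pw S ν * (p' * Pw S ν) := by rw [← o2_Ddiag_comm S hiso hsum hp'D ν]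
            _ = Pw S ν * p' * Pw S ν := by rw [mul_assoc]
            _ = 0 := hPpP
        rw [o2_Ddiag_comm S hiso hsum hp'D ν]
        exact hPp
      have hp'p : p' * p = p' := by
        have h1 : p' * (1 - p) = 0 := by
          rw [hpM, Finset.mul_sum]
          exact Finset.sum_eq_zero hPzero
        calc p' * p = p' * 1 - p' * (1 - p) := by noncomm_ring
          _ = p' := by rw [h1, mul_one, sub_zero]
      have hpp' : p * p' = p' := by
        have := congrArg star hp'p
        rwa [star_mul, hsa', hsap] at this
      refine (StarOrderedRing.le_iff _ _).mpr
        ⟨star (p * (1 - p')) * (p * (1 - p')),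
          AddSubmonoid.subset_closure ⟨p * (1 - p'), rfl⟩, ?_⟩
      have key : star (p * (1 - p')) * (p * (1 - p')) = p - p' := by
        have h1 : star (p * (1 - p')) = (1 - p') * p := by
          rw [star_mul, star_sub, star_one, hsa', hsap]
        rw [h1]
        have e : (1 - p') * p * (p * (1 - p'))
            = p * p - p' * (p * p) - (p * p) * p' + p' * ((p * p) * p') := by noncomm_ring
        rw [e, hpp, hpp', hp'p, hp'id]
        abel
      rw [key]
      abel
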